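/- Constrained optimization shrinks uncertainty: let A ≻ 0 be n×n, and let W₁, W₂ have orthonormal columns with range(W₂) ⊆ range(W₁). Then the degenerate covariances Σᵢ = Wᵢ(WᵢᵀAWᵢ)⁻¹Wᵢᵀ satisfy Σ₁ ⪰ Σ₂ in the Loewner order restricted to range(W₂), i.e., for every v ∈ range(W₂), vᵀΣ₂v ≤ vᵀΣ₁v. -/

import Mathlib

open Matrix

private lemma conj_quad {n k : ℕ} (A : Matrix (Fin n) (Fin n) ℝ)
    (W : Matrix (Fin n) (Fin k) ℝ) (x : Fin k → ℝ) :
    x ⬝ᵥ (Wᵀ * A * W) *ᵥ x = (W *ᵥ x) ⬝ᵥ A *ᵥ (W *ᵥ x) := by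
  rw [Matrix.mul_assoc, ← mulVec_mulVec, dotProduct_mulVec, vecMul_transpose, ← mulVec_mulVec]

private lemma transpose_dot {n k : ℕ} (M : Matrix (Fin n) (Fin k) ℝ) (a : Fin n → ℝ)
    (b : Fin k → ℝ) : (Mᵀ *ᵥ a) ⬝ᵥ b = a ⬝ᵥ (M *ᵥ b) := by
  rw [mulVec_transpose, ← dotProduct_mulVec]

private lemma conj_posDef {n k : ℕ} {A : Matrix (Fin n) (Fin n) ℝ} (hA : A.PosDef)
    (W : Matrix (Fin n) (Fin k) ℝ) (hW : Wᵀ * W = 1) : (Wᵀ * A * W).PosDef := by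
  have h := hA.posSemidef.conjTranspose_mul_mul_same W
  rw [conjTranspose_eq_transpose_of_trivial] at h
  refine posDef_iff_dotProduct_mulVec.mpr ⟨h.isHermitian, fun x hx => ?_⟩
  have hWx : W.mulVec x ≠ 0 := by
    intro h0
    apply hx
    have : (Wᵀ * W).mulVec x = Wᵀ.mulVec (W.mulVec x) := by rw [← mulVec_mulVec]
    rw [hW, one_mulVec, h0, mulVec_zero] at this
    exact this
  have h2 := hA.dotProduct_mulVec_pos hWx
  simp only [star_trivial] at h2 ⊢
  rw [conj_quad]
  exact h2

private lemma core_ineq {m : ℕ} {B : Matrix (Fin m) (Fin m) ℝ} (hB : B.PosDef)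
    (u w : Fin m → ℝ) :
    2 * (w ⬝ᵥ u) - w ⬝ᵥ B.mulVec w ≤ u ⬝ᵥ B⁻¹.mulVec u := by
  have hBinv : B * B⁻¹ = 1 := mul_nonsing_inv B (isUnit_iff_ne_zero.mpr hB.det_pos.ne')
  have hBsymm : Bᵀ = B := by
    rw [← conjTranspose_eq_transpose_of_trivial]; exact hB.1
  have hinvT : B⁻¹ᵀ = B⁻¹ := by rw [transpose_nonsing_inv, hBsymm]
  set p := B⁻¹ *ᵥ u with hp
  have hBp : B *ᵥ p = u := by rw [hp, mulVec_mulVec, hBinv, one_mulVec]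
  have h0 : 0 ≤ (w - p) ⬝ᵥ B *ᵥ (w - p) := by simpa using hB.posSemidef.dotProduct_mulVec_nonneg (w - p)
  have e1 : w ⬝ᵥ B *ᵥ p = w ⬝ᵥ u := by rw [hBp]
  have e2 : p ⬝ᵥ B *ᵥ w = u ⬝ᵥ w := by
    rw [dotProduct_mulVec, ← mulVec_transpose, hBsymm, hBp]
  have e3 : p ⬝ᵥ B *ᵥ p = p ⬝ᵥ u := by rw [hBp]
  have e4 : u ⬝ᵥ B⁻¹ *ᵥ u = p ⬝ᵥ u := by
    rw [dotProduct_mulVec, ← mulVec_transpose, hinvT]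
  rw [mulVec_sub, sub_dotProduct, dotProduct_sub, dotProduct_sub] at h0
  have hc : u ⬝ᵥ w = w ⬝ᵥ u := dotProduct_comm u w
  linarith

/-- Constraining shrinks uncertainty: for `A ≻ 0` and `W₁, W₂` with orthonormal columns and
`col(W₂) ⊆ col(W₁)`, the degenerate covariances `Σᵢ = Wᵢ(WᵢᵀAWᵢ)⁻¹Wᵢᵀ` satisfy
`vᵀ Σ₂ v ≤ vᵀ Σ₁ v` for every `v` in the column space of `W₂`. -/
theorem stmt19 (n k₁ k₂ : ℕ) (A : Matrix (Fin n) (Fin n) ℝ) (hA : A.PosDef)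
    (W₁ : Matrix (Fin n) (Fin k₁) ℝ) (W₂ : Matrix (Fin n) (Fin k₂) ℝ)
    (hW₁ : W₁ᵀ * W₁ = 1) (hW₂ : W₂ᵀ * W₂ = 1)
    (hsub : LinearMap.range W₂.mulVecLin ≤ LinearMap.range W₁.mulVecLin)
    (S₁ S₂ : Matrix (Fin n) (Fin n) ℝ)
    (hS₁ : S₁ = W₁ * (W₁ᵀ * A * W₁)⁻¹ * W₁ᵀ) (hS₂ : S₂ = W₂ * (W₂ᵀ * A * W₂)⁻¹ * W₂ᵀ) :
    ∀ v : Fin n → ℝ, v ∈ LinearMap.range W₂.mulVecLin →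
      v ⬝ᵥ S₂.mulVec v ≤ v ⬝ᵥ S₁.mulVec v := by
  intro v hv
  obtain ⟨x, hx⟩ := hv
  simp only [mulVecLin_apply] at hx
  have hB₁ := conj_posDef hA W₁ hW₁
  have hB₂ := conj_posDef hA W₂ hW₂
  have hB₂inv : (W₂ᵀ * A * W₂) * (W₂ᵀ * A * W₂)⁻¹ = 1 :=
    mul_nonsing_inv _ (isUnit_iff_ne_zero.mpr hB₂.det_pos.ne')
  -- projection identity on range of W₂
  have hproj : ∀ c : Fin k₂ → ℝ, W₁ *ᵥ (W₁ᵀ *ᵥ (W₂ *ᵥ c)) = W₂ *ᵥ c := by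
    intro c
    obtain ⟨d, hd⟩ := hsub ⟨c, rfl⟩
    simp only [mulVecLin_apply] at hd
    rw [← hd, mulVec_mulVec, mulVec_mulVec, Matrix.mul_assoc, hW₁, Matrix.mul_one]
  have hWTv : W₂ᵀ *ᵥ v = x := by
    rw [← hx, mulVec_mulVec, hW₂, one_mulVec]
  set z : Fin k₂ → ℝ := (W₂ᵀ * A * W₂)⁻¹ *ᵥ x with hz
  set u : Fin k₁ → ℝ := W₁ᵀ *ᵥ v with hu
  set w : Fin k₁ → ℝ := W₁ᵀ *ᵥ (W₂ *ᵥ z) with hw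
  -- LHS = x ⬝ᵥ z
  have hL : v ⬝ᵥ S₂ *ᵥ v = x ⬝ᵥ z := by
    rw [hS₂, ← mulVec_mulVec, ← mulVec_mulVec, hWTv, ← hz, ← transpose_dot, hWTv]
  -- RHS = u ⬝ᵥ B₁⁻¹ u
  have hR : v ⬝ᵥ S₁ *ᵥ v = u ⬝ᵥ (W₁ᵀ * A * W₁)⁻¹ *ᵥ u := by
    rw [hS₁, ← mulVec_mulVec, ← mulVec_mulVec, ← transpose_dot, ← hu]
  -- w ⬝ᵥ u = z ⬝ᵥ x
  have hE : w ⬝ᵥ u = z ⬝ᵥ x := by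
    rw [hw, hu, transpose_dot, ← hx, hproj x, ← transpose_dot, mulVec_mulVec, hW₂,
      one_mulVec]
  -- w ⬝ᵥ B₁ w = z ⬝ᵥ x
  have hF : w ⬝ᵥ (W₁ᵀ * A * W₁) *ᵥ w = z ⬝ᵥ x := by
    rw [conj_quad, hw, hproj z, ← conj_quad, hz, mulVec_mulVec, hB₂inv, one_mulVec]
  have hcore := core_ineq hB₁ u w
  rw [hE, hF] at hcore
  rw [hL, hR, dotProduct_comm x z]
  linarith
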